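/- Set b := min_{1≤i≤N} b_i, B := max_{1≤i≤N} b_i, r := min_{1≤i≤N−1} (r_{i+1} − r_i), and μ := min{ b·r^{N−1} / (4D(2r_N)^{N−1} + 4NB(2r_N)^{N−2} + 1), r/4, r_1/4 }. Then |P_N(λ)| ≥ b·r^{N−1}/2 > 0 for every λ in the union of the intervals [−r_j − μ, −r_j + μ], 1 ≤ j ≤ N; consequently, if a_1 > a_2 > ⋯ > a_N are the N real roots of P_N, then |a_i − a_j| ≥ 2μ for all 1 ≤ i < j ≤ N. -/

import Mathlib

open Polynomial

set_option maxHeartbeats 4000000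

/-- Product difference bound. -/
lemma stmt13_prod_diff {ι : Type*} [DecidableEq ι] (s : Finset ι) (u v : ι → ℝ) (M ε : ℝ)
    (hM : 0 ≤ M) (hε : 0 ≤ ε)
    (hu : ∀ i ∈ s, |u i| ≤ M) (hv : ∀ i ∈ s, |v i| ≤ M)
    (huv : ∀ i ∈ s, |u i - v i| ≤ ε) :
    |(∏ i ∈ s, u i) - ∏ i ∈ s, v i| ≤ s.card * ε * M ^ (s.card - 1) := by
  induction s using Finset.induction with
  | empty => simp
  | insert _ _ hnotmem ih =>
    rename_i a s
    have hu' : ∀ i ∈ s, |u i| ≤ M := fun i hi => hu i (Finset.mem_insert_of_mem hi)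
    have hv' : ∀ i ∈ s, |v i| ≤ M := fun i hi => hv i (Finset.mem_insert_of_mem hi)
    have huv' : ∀ i ∈ s, |u i - v i| ≤ ε := fun i hi => huv i (Finset.mem_insert_of_mem hi)
    have ihs := ih hu' hv' huv'
    have hua : |u a| ≤ M := hu a (Finset.mem_insert_self a s)
    have huva : |u a - v a| ≤ ε := huv a (Finset.mem_insert_self a s)
    have hPv : |∏ i ∈ s, v i| ≤ M ^ s.card := by
      rw [Finset.abs_prod]
      calc ∏ i ∈ s, |v i| ≤ ∏ _i ∈ s, M :=
            Finset.prod_le_prod (fun i _ => abs_nonneg _) hv'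
        _ = M ^ s.card := by rw [Finset.prod_const]
    rw [Finset.prod_insert hnotmem, Finset.prod_insert hnotmem]
    have hsplit : u a * ∏ i ∈ s, u i - v a * ∏ i ∈ s, v i =
        u a * ((∏ i ∈ s, u i) - ∏ i ∈ s, v i) + (u a - v a) * ∏ i ∈ s, v i := by ring
    rw [hsplit]
    have h1 : |u a * ((∏ i ∈ s, u i) - ∏ i ∈ s, v i)| ≤ M * (s.card * ε * M ^ (s.card - 1)) := by
      rw [abs_mul]
      exact mul_le_mul hua ihs (abs_nonneg _) hM
    have h2 : |(u a - v a) * ∏ i ∈ s, v i| ≤ ε * M ^ s.card := by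
      rw [abs_mul]
      exact mul_le_mul huva hPv (abs_nonneg _) hε
    have h3 : M * ((s.card : ℝ) * ε * M ^ (s.card - 1)) ≤ (s.card : ℝ) * ε * M ^ s.card := by
      rcases Nat.eq_zero_or_pos s.card with h | h
      · simp [h]
      · have : M * M ^ (s.card - 1) = M ^ s.card := by
          rw [← pow_succ']
          congr 1
          omega
        rw [show M * ((s.card : ℝ) * ε * M ^ (s.card - 1))
            = (s.card : ℝ) * ε * (M * M ^ (s.card - 1)) by ring, this]
    have hcard : (insert a s).card = s.card + 1 := Finset.card_insert_of_notMem hnotmem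
    calc |u a * ((∏ i ∈ s, u i) - ∏ i ∈ s, v i) + (u a - v a) * ∏ i ∈ s, v i|
        ≤ |u a * ((∏ i ∈ s, u i) - ∏ i ∈ s, v i)| + |(u a - v a) * ∏ i ∈ s, v i| := abs_add_le _ _
      _ ≤ (s.card : ℝ) * ε * M ^ s.card + ε * M ^ s.card := by linarith
      _ = ((s.card : ℝ) + 1) * ε * M ^ s.card := by ring
      _ = (insert a s).card * ε * M ^ ((insert a s).card - 1) := by
          rw [hcard]; push_cast; ring_nf
  
lemma stmt13_fin_id {n : ℕ} (f : Fin n → Fin n) (hf : StrictMono f)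
    (hsurj : Function.Surjective f) : ∀ m, f m = m := by
  have : WellFoundedLT (Fin n) := inferInstance
  intro m
  have hbij : Function.Bijective f := ⟨hf.injective, hsurj⟩
  set e := Equiv.ofBijective f hbij with he
  have hsymm : StrictMono e.symm := by
    intro x y hxy
    have : f (e.symm x) < f (e.symm y) := by
      have hx : f (e.symm x) = x := e.apply_symm_apply x
      have hy : f (e.symm y) = y := e.apply_symm_apply y
      rw [hx, hy]; exact hxy
    exact hf.lt_iff_lt.mp this
  have h1 : m ≤ f m := StrictMono.le_apply hf
  have h2 : f m ≤ e.symm (f m) := StrictMono.le_apply hsymm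
  have h3 : e.symm (f m) = m := e.symm_apply_apply m
  exact le_antisymm (le_trans h2 (le_of_eq h3)) h1

/-- With `bm := min b_i`, `B := max b_i`, `rm := min (r_{i+1} - r_i)` and
`μ := min { bm·rm^(N-1) / (4D(2r_N)^(N-1) + 4NB(2r_N)^(N-2) + 1), rm/4, r_1/4 }`, one has
`|P_N(λ)| ≥ bm·rm^(N-1)/2 > 0` for every `λ` in the union of the intervals
`[-r_j - μ, -r_j + μ]`; consequently, if `a_1 > ⋯ > a_N` are the `N` real roots of `P_N`,
then `|a_i - a_j| ≥ 2μ` for all `i < j`. -/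
theorem stmt_13 (N : ℕ) (hN : 2 ≤ N) (r b : Fin N → ℝ)
    (hr : ∀ i, 0 < r i) (hrmono : StrictMono r) (hb : ∀ i, 0 < b i)
    (D : ℝ) (hD : 0 < D)
    (P : Polynomial ℝ)
    (hP : P = C D * ∏ j, (X + C (r j)) -
      ∑ i, C (b i) * ∏ j ∈ Finset.univ.erase i, (X + C (r j)))
    (a : Fin N → ℝ) (haanti : StrictAnti a)
    (haroots : ∀ x : ℝ, P.eval x = 0 ↔ ∃ j, x = a j)
    (bm B rm μ : ℝ)
    (hbm : bm = Finset.univ.inf' ⟨⟨0, by omega⟩, Finset.mem_univ _⟩ b)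
    (hB : B = Finset.univ.sup' ⟨⟨0, by omega⟩, Finset.mem_univ _⟩ b)
    (hrm_le : ∀ i : Fin N, ∀ h : (i : ℕ) + 1 < N, rm ≤ r ⟨(i : ℕ) + 1, h⟩ - r i)
    (hrm_mem : ∃ i : Fin N, ∃ h : (i : ℕ) + 1 < N, rm = r ⟨(i : ℕ) + 1, h⟩ - r i)
    (hμ : μ = min (min
      (bm * rm ^ (N - 1) /
        (4 * D * (2 * r ⟨N - 1, by omega⟩) ^ (N - 1) +
          4 * (N : ℝ) * B * (2 * r ⟨N - 1, by omega⟩) ^ (N - 2) + 1))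
      (rm / 4)) (r ⟨0, by omega⟩ / 4)) :
    0 < bm * rm ^ (N - 1) / 2 ∧
    (∀ j : Fin N, ∀ x : ℝ, x ∈ Set.Icc (-(r j) - μ) (-(r j) + μ) →
      bm * rm ^ (N - 1) / 2 ≤ |P.eval x|) ∧
    (∀ i j : Fin N, i < j → 2 * μ ≤ |a i - a j|) := by
  have hN1 : 1 ≤ N := by omega
  set i0 : Fin N := ⟨0, by omega⟩ with hi0
  set iT : Fin N := ⟨N - 1, by omega⟩ with hiT
  set M : ℝ := 2 * r iT with hM
  set Q : ℝ := 4 * D * M ^ (N - 1) + 4 * (N : ℝ) * B * M ^ (N - 2) + 1 with hQ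
  -- basic positivity facts
  have hrmpos : 0 < rm := by
    obtain ⟨i, h, hi⟩ := hrm_mem
    have : r i < r ⟨(i : ℕ) + 1, h⟩ := hrmono (by simp [Fin.lt_def])
    rw [hi]; linarith
  have hbm_le : ∀ i, bm ≤ b i := by
    intro i; rw [hbm]; exact Finset.inf'_le b (Finset.mem_univ i)
  have hle_B : ∀ i, b i ≤ B := by
    intro i; rw [hB]; exact Finset.le_sup' b (Finset.mem_univ i)
  have hbmpos : 0 < bm := by
    obtain ⟨i, _, hi⟩ := Finset.exists_mem_eq_inf' (α := ℝ)
      (⟨i0, Finset.mem_univ _⟩ : (Finset.univ : Finset (Fin N)).Nonempty) b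
    rw [hbm, hi]; exact hb i
  have hbmB : bm ≤ B := le_trans (hbm_le i0) (hle_B i0)
  have hBpos : 0 < B := lt_of_lt_of_le hbmpos hbmB
  have hr_le_T : ∀ k, r k ≤ r iT := by
    intro k
    exact hrmono.monotone (show k ≤ iT from Fin.le_def.2 (Nat.le_sub_one_of_lt k.isLt))
  have hr0_le : ∀ k, r i0 ≤ r k := by
    intro k
    exact hrmono.monotone (show i0 ≤ k from Fin.le_def.2 (Nat.zero_le _))
  have hrTpos : 0 < r iT := hr iT
  have hr0pos : 0 < r i0 := hr i0
  have hMpos : 0 < M := by rw [hM]; linarith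
  have hM1nn : (0:ℝ) ≤ M ^ (N - 1) := by positivity
  have hM2nn : (0:ℝ) ≤ M ^ (N - 2) := by positivity
  have hR1pos : 0 < rm ^ (N - 1) := pow_pos hrmpos _
  have hQpos : 0 < Q := by
    rw [hQ]
    have : 0 ≤ 4 * D * M ^ (N - 1) := by positivity
    have : 0 ≤ 4 * (N : ℝ) * B * M ^ (N - 2) := by positivity
    linarith
  have hμ_eq : μ = min (min (bm * rm ^ (N - 1) / Q) (rm / 4)) (r i0 / 4) := hμ
  have hμpos : 0 < μ := by
    rw [hμ_eq]
    refine lt_min (lt_min ?_ ?_) ?_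
    · exact div_pos (mul_pos hbmpos hR1pos) hQpos
    · linarith
    · linarith
  have hμQ : μ * Q ≤ bm * rm ^ (N - 1) := by
    have h1 : μ ≤ bm * rm ^ (N - 1) / Q :=
      le_trans (hμ_eq ▸ min_le_left _ _) (min_le_left _ _)
    calc μ * Q ≤ (bm * rm ^ (N - 1) / Q) * Q := by
          exact mul_le_mul_of_nonneg_right h1 hQpos.le
      _ = bm * rm ^ (N - 1) := by field_simp
  have hμrm : μ ≤ rm / 4 :=
    le_trans (hμ_eq ▸ min_le_left _ _) (min_le_right _ _)
  have hμr0 : μ ≤ r i0 / 4 := hμ_eq ▸ min_le_right _ _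
  -- gap between distinct r's
  have gap : ∀ ⦃p q : Fin N⦄, p < q → rm ≤ r q - r p := by
    intro p q hpq
    have hpq' : (p : ℕ) < (q : ℕ) := hpq
    have h : (p : ℕ) + 1 < N := by have := q.isLt; omega
    have h1 := hrm_le p h
    have h2 : r ⟨(p : ℕ) + 1, h⟩ ≤ r q := hrmono.monotone (by simp [Fin.le_def]; omega)
    linarith
  have gap_abs : ∀ ⦃k j : Fin N⦄, k ≠ j → rm ≤ |r k - r j| := by
    intro k j hkj
    rcases lt_or_gt_of_ne hkj with h | h
    · rw [abs_sub_comm, abs_of_nonneg (by linarith [(hrmono.monotone h.le : r k ≤ r j), gap h] : (0:ℝ) ≤ r j - r k)]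
      exact gap h
    · rw [abs_of_nonneg (by linarith [gap h] : (0:ℝ) ≤ r k - r j)]
      exact gap h
  have hvbound : ∀ k j : Fin N, |r k - r j| ≤ r iT - r i0 := by
    intro k j
    rw [abs_le]
    have h1 := hr_le_T k; have h2 := hr0_le j; have h3 := hr_le_T j; have h4 := hr0_le k
    constructor <;> linarith
  -- evaluation formula
  have evalP : ∀ x : ℝ, P.eval x =
      D * ∏ k, (x + r k) - ∑ i, b i * ∏ k ∈ Finset.univ.erase i, (x + r k) := by
    intro x
    simp [hP, eval_prod, eval_finset_sum]
  -- cardinalities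
  have hcard_univ : (Finset.univ : Finset (Fin N)).card = N := by simp
  have hcard_erase : ∀ j : Fin N, (Finset.univ.erase j).card = N - 1 := by
    intro j; rw [Finset.card_erase_of_mem (Finset.mem_univ j), hcard_univ]
  have hcard_erase2 : ∀ i j : Fin N, i ≠ j →
      ((Finset.univ.erase i).erase j).card = N - 2 := by
    intro i j hij
    rw [Finset.card_erase_of_mem (Finset.mem_erase.2 ⟨hij.symm, Finset.mem_univ j⟩),
      hcard_erase i]
    omega
  have hcN1 : ((N - 1 : ℕ) : ℝ) = (N : ℝ) - 1 := by
    push_cast [hN1]; ring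
  clear_value i0 iT M Q
  -- PART 1
  have part1 : 0 < bm * rm ^ (N - 1) / 2 := by positivity
  -- PART 2
  have part2 : ∀ j : Fin N, ∀ x : ℝ, x ∈ Set.Icc (-(r j) - μ) (-(r j) + μ) →
      bm * rm ^ (N - 1) / 2 ≤ |P.eval x| := by
    intro j x hx
    obtain ⟨hx1, hx2⟩ := hx
    have ht : |x + r j| ≤ μ := abs_le.2 ⟨by linarith, by linarith⟩
    have hvM : ∀ k : Fin N, |r k - r j| ≤ M := by
      intro k
      have h1 := hvbound k j
      rw [hM]
      linarith [hr0pos]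
    have huM : ∀ k : Fin N, |x + r k| ≤ M := by
      intro k
      have he : x + r k = (r k - r j) + (x + r j) := by ring
      have h1 : |x + r k| ≤ |r k - r j| + |x + r j| := by rw [he]; exact abs_add_le _ _
      have h2 := hvbound k j
      rw [hM]
      have h3 : μ ≤ r i0 / 4 := hμr0
      linarith [hrTpos, hr0pos]
    have huv : ∀ k : Fin N, abs (|x + r k| - |r k - r j|) ≤ μ := by
      intro k
      have h1 : abs (|x + r k| - |r k - r j|) ≤ |(x + r k) - (r k - r j)| :=
        abs_abs_sub_abs_le_abs_sub _ _
      have h2 : (x + r k) - (r k - r j) = x + r j := by ring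
      rw [h2] at h1
      exact le_trans h1 ht
    have hunn : ∀ k : Fin N, (0:ℝ) ≤ |x + r k| := fun k => abs_nonneg _
    -- lower bound for the reference product
    have hVlo : rm ^ (N - 1) ≤ ∏ k ∈ Finset.univ.erase j, |r k - r j| := by
      calc rm ^ (N - 1) = ∏ _k ∈ Finset.univ.erase j, rm := by
            rw [Finset.prod_const, hcard_erase j]
        _ ≤ ∏ k ∈ Finset.univ.erase j, |r k - r j| := by
            apply Finset.prod_le_prod (fun k _ => hrmpos.le)
            intro k hk
            exact gap_abs (Finset.mem_erase.1 hk).1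
    have hdiff := stmt13_prod_diff (Finset.univ.erase j)
        (fun k => |x + r k|) (fun k => |r k - r j|) M μ hMpos.le hμpos.le
        (fun k _ => by rw [abs_abs]; exact huM k)
        (fun k _ => by rw [abs_abs]; exact hvM k)
        (fun k _ => huv k)
    rw [hcard_erase j, show N - 1 - 1 = N - 2 from by omega] at hdiff
    have hUlo : rm ^ (N - 1) - ((N - 1 : ℕ) : ℝ) * μ * M ^ (N - 2) ≤
        ∏ k ∈ Finset.univ.erase j, |x + r k| := by
      have h1 := (abs_le.1 hdiff).1
      linarith
    have hUup : ∏ k ∈ Finset.univ.erase j, |x + r k| ≤ M ^ (N - 1) := by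
      calc ∏ k ∈ Finset.univ.erase j, |x + r k| ≤ ∏ _k ∈ Finset.univ.erase j, M :=
            Finset.prod_le_prod (fun k _ => hunn k) (fun k _ => huM k)
        _ = M ^ (N - 1) := by rw [Finset.prod_const, hcard_erase j]
    have hUi : ∀ i : Fin N, i ≠ j →
        ∏ k ∈ Finset.univ.erase i, |x + r k| ≤ μ * M ^ (N - 2) := by
      intro i hij
      have hjmem : j ∈ Finset.univ.erase i :=
        Finset.mem_erase.2 ⟨Ne.symm hij, Finset.mem_univ j⟩
      rw [← Finset.mul_prod_erase _ (fun k => |x + r k|) hjmem]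
      have h2 : ∏ k ∈ (Finset.univ.erase i).erase j, |x + r k| ≤ M ^ (N - 2) := by
        calc ∏ k ∈ (Finset.univ.erase i).erase j, |x + r k|
            ≤ ∏ _k ∈ (Finset.univ.erase i).erase j, M :=
              Finset.prod_le_prod (fun k _ => hunn k) (fun k _ => huM k)
          _ = M ^ (N - 2) := by rw [Finset.prod_const, hcard_erase2 i j hij]
      exact mul_le_mul ht h2 (Finset.prod_nonneg (fun k _ => hunn k)) hμpos.le
    -- rewrite P.eval x
    have hPx : P.eval x = (D * ∏ k, (x + r k) -
        ∑ i ∈ Finset.univ.erase j, b i * ∏ k ∈ Finset.univ.erase i, (x + r k)) -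
        b j * ∏ k ∈ Finset.univ.erase j, (x + r k) := by
      rw [evalP x, ← Finset.add_sum_erase _ _ (Finset.mem_univ j)]
      ring
    -- main term lower bound
    have hmain : bm * (rm ^ (N - 1) - ((N - 1 : ℕ) : ℝ) * μ * M ^ (N - 2)) ≤
        |b j * ∏ k ∈ Finset.univ.erase j, (x + r k)| := by
      rw [abs_mul, abs_of_pos (hb j), Finset.abs_prod]
      have h1 : bm * (rm ^ (N - 1) - ((N - 1 : ℕ) : ℝ) * μ * M ^ (N - 2)) ≤
          bm * ∏ k ∈ Finset.univ.erase j, |x + r k| :=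
        mul_le_mul_of_nonneg_left hUlo hbmpos.le
      have h2 : bm * ∏ k ∈ Finset.univ.erase j, |x + r k| ≤
          b j * ∏ k ∈ Finset.univ.erase j, |x + r k| :=
        mul_le_mul_of_nonneg_right (hbm_le j) (Finset.prod_nonneg (fun k _ => hunn k))
      linarith
    -- error term bounds
    have herr1 : |D * ∏ k, (x + r k)| ≤ D * (μ * M ^ (N - 1)) := by
      rw [abs_mul, abs_of_pos hD, Finset.abs_prod]
      apply mul_le_mul_of_nonneg_left _ hD.le
      rw [← Finset.mul_prod_erase _ (fun k => |x + r k|) (Finset.mem_univ j)]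
      exact mul_le_mul ht hUup (Finset.prod_nonneg (fun k _ => hunn k)) hμpos.le
    have herr2 : |∑ i ∈ Finset.univ.erase j, b i * ∏ k ∈ Finset.univ.erase i, (x + r k)| ≤
        ((N - 1 : ℕ) : ℝ) * (B * (μ * M ^ (N - 2))) := by
      calc |∑ i ∈ Finset.univ.erase j, b i * ∏ k ∈ Finset.univ.erase i, (x + r k)|
          ≤ ∑ i ∈ Finset.univ.erase j, |b i * ∏ k ∈ Finset.univ.erase i, (x + r k)| :=
            Finset.abs_sum_le_sum_abs _ _
        _ ≤ ∑ _i ∈ Finset.univ.erase j, B * (μ * M ^ (N - 2)) := by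
            apply Finset.sum_le_sum
            intro i hi
            rw [abs_mul, abs_of_pos (hb i), Finset.abs_prod]
            exact mul_le_mul (hle_B i) (hUi i (Finset.mem_erase.1 hi).1)
              (Finset.prod_nonneg (fun k _ => hunn k)) hBpos.le
        _ = ((N - 1 : ℕ) : ℝ) * (B * (μ * M ^ (N - 2))) := by
            rw [Finset.sum_const, hcard_erase j, nsmul_eq_mul]
    -- combine with reverse triangle inequality
    have hcomb : bm * (rm ^ (N - 1) - ((N - 1 : ℕ) : ℝ) * μ * M ^ (N - 2)) -
        (D * (μ * M ^ (N - 1)) + ((N - 1 : ℕ) : ℝ) * (B * (μ * M ^ (N - 2)))) ≤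
        |P.eval x| := by
      have htri := abs_sub_abs_le_abs_sub
        (b j * ∏ k ∈ Finset.univ.erase j, (x + r k))
        (D * ∏ k, (x + r k) -
          ∑ i ∈ Finset.univ.erase j, b i * ∏ k ∈ Finset.univ.erase i, (x + r k))
      have heq : b j * ∏ k ∈ Finset.univ.erase j, (x + r k) -
          (D * ∏ k, (x + r k) -
            ∑ i ∈ Finset.univ.erase j, b i * ∏ k ∈ Finset.univ.erase i, (x + r k)) =
          -(P.eval x) := by rw [hPx]; ring
      rw [heq, abs_neg] at htri
      have htri2 : |D * ∏ k, (x + r k) -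
          ∑ i ∈ Finset.univ.erase j, b i * ∏ k ∈ Finset.univ.erase i, (x + r k)| ≤
          D * (μ * M ^ (N - 1)) + ((N - 1 : ℕ) : ℝ) * (B * (μ * M ^ (N - 2))) := by
        have h := abs_sub (D * ∏ k, (x + r k))
          (∑ i ∈ Finset.univ.erase j, b i * ∏ k ∈ Finset.univ.erase i, (x + r k))
        linarith
      linarith
    -- final arithmetic
    rw [hcN1] at hcomb
    have hNr : (2:ℝ) ≤ (N : ℝ) := by exact_mod_cast hN
    have hcoef : 2 * (bm * ((N:ℝ) - 1) * M ^ (N - 2) + D * M ^ (N - 1) +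
        ((N:ℝ) - 1) * B * M ^ (N - 2)) ≤ Q := by
      have e1 : bm * ((N:ℝ) - 1) ≤ B * (N:ℝ) := by
        have e1a : bm * ((N:ℝ) - 1) ≤ B * ((N:ℝ) - 1) :=
          mul_le_mul_of_nonneg_right hbmB (by linarith)
        nlinarith [hBpos]
      have e2 : bm * ((N:ℝ) - 1) * M ^ (N - 2) ≤ B * (N:ℝ) * M ^ (N - 2) :=
        mul_le_mul_of_nonneg_right e1 hM2nn
      have e3 : ((N:ℝ) - 1) * B * M ^ (N - 2) ≤ (N:ℝ) * B * M ^ (N - 2) :=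
        mul_le_mul_of_nonneg_right (by nlinarith [hBpos]) hM2nn
      have e4 : 0 ≤ D * M ^ (N - 1) := mul_nonneg hD.le hM1nn
      rw [hQ]
      linarith
    have hfin : bm * ((N:ℝ) - 1) * μ * M ^ (N - 2) + D * (μ * M ^ (N - 1)) +
        ((N:ℝ) - 1) * (B * (μ * M ^ (N - 2))) ≤ bm * rm ^ (N - 1) / 2 := by
      have heq2 : bm * ((N:ℝ) - 1) * μ * M ^ (N - 2) + D * (μ * M ^ (N - 1)) +
          ((N:ℝ) - 1) * (B * (μ * M ^ (N - 2))) =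
          μ * (bm * ((N:ℝ) - 1) * M ^ (N - 2) + D * M ^ (N - 1) +
            ((N:ℝ) - 1) * B * M ^ (N - 2)) := by ring
      rw [heq2]
      have h1 : μ * (bm * ((N:ℝ) - 1) * M ^ (N - 2) + D * M ^ (N - 1) +
          ((N:ℝ) - 1) * B * M ^ (N - 2)) ≤ μ * (Q / 2) :=
        mul_le_mul_of_nonneg_left (by linarith) hμpos.le
      calc μ * (bm * ((N:ℝ) - 1) * M ^ (N - 2) + D * M ^ (N - 1) +
            ((N:ℝ) - 1) * B * M ^ (N - 2)) ≤ μ * (Q / 2) := h1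
        _ = (μ * Q) / 2 := by ring
        _ ≤ bm * rm ^ (N - 1) / 2 := by linarith [hμQ]
    linarith [hcomb, hfin]
  -- PART 3
  have part3 : ∀ i j : Fin N, i < j → 2 * μ ≤ |a i - a j| := by
    -- a large point where P is positive
    have hbig : ∃ x0 : ℝ, 0 < x0 ∧ 0 < P.eval x0 := by
      have hs : 0 < ∑ i, b i := Finset.sum_pos (fun i _ => hb i) ⟨i0, Finset.mem_univ _⟩
      refine ⟨(∑ i, b i) / D + 1, by positivity, ?_⟩
      set x0 : ℝ := (∑ i, b i) / D + 1 with hx0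
      have hx0pos : 0 < x0 := by rw [hx0]; positivity
      have hfac : ∀ k : Fin N, 0 < x0 + r k := fun k => by linarith [hr k]
      have hA : 0 < ∏ k, (x0 + r k) := Finset.prod_pos (fun k _ => hfac k)
      have hsum : (∑ i, b i * ∏ k ∈ Finset.univ.erase i, (x0 + r k)) * x0 ≤
          (∑ i, b i) * ∏ k, (x0 + r k) := by
        rw [Finset.sum_mul, Finset.sum_mul]
        apply Finset.sum_le_sum
        intro i _
        have hpe : (x0 + r i) * ∏ k ∈ Finset.univ.erase i, (x0 + r k) = ∏ k, (x0 + r k) :=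
          Finset.mul_prod_erase _ (fun k => x0 + r k) (Finset.mem_univ i)
        have hpnn : 0 ≤ ∏ k ∈ Finset.univ.erase i, (x0 + r k) :=
          (Finset.prod_pos (fun k _ => hfac k)).le
        calc (b i * ∏ k ∈ Finset.univ.erase i, (x0 + r k)) * x0
            = b i * (x0 * ∏ k ∈ Finset.univ.erase i, (x0 + r k)) := by ring
          _ ≤ b i * ((x0 + r i) * ∏ k ∈ Finset.univ.erase i, (x0 + r k)) := by
              apply mul_le_mul_of_nonneg_left _ (hb i).le
              apply mul_le_mul_of_nonneg_right _ hpnn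
              linarith [hr i]
          _ = b i * ∏ k, (x0 + r k) := by rw [hpe]
      have hDx0 : (∑ i, b i) < D * x0 := by
        rw [hx0, mul_add, mul_one, mul_div_cancel₀ _ hD.ne']
        linarith
      have h2 : (∑ i, b i) * ∏ k, (x0 + r k) < (D * x0) * ∏ k, (x0 + r k) :=
        mul_lt_mul_of_pos_right hDx0 hA
      have h3 : (∑ i, b i * ∏ k ∈ Finset.univ.erase i, (x0 + r k)) * x0 <
          (D * ∏ k, (x0 + r k)) * x0 := by
        calc (∑ i, b i * ∏ k ∈ Finset.univ.erase i, (x0 + r k)) * x0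
            ≤ (∑ i, b i) * ∏ k, (x0 + r k) := hsum
          _ < (D * x0) * ∏ k, (x0 + r k) := h2
          _ = (D * ∏ k, (x0 + r k)) * x0 := by ring
      have h4 : ∑ i, b i * ∏ k ∈ Finset.univ.erase i, (x0 + r k) <
          D * ∏ k, (x0 + r k) := lt_of_mul_lt_mul_right h3 hx0pos.le
      rw [evalP x0]
      linarith
    obtain ⟨x0, hx0pos, hPx0⟩ := hbig
    -- sign of P at the points -(r m)
    have hPsign : ∀ m : Fin N, 0 < (-1:ℝ)^((m:ℕ)+1) * P.eval (-(r m)) := by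
      intro m
      have hval : P.eval (-(r m)) = -(b m * ∏ k ∈ Finset.univ.erase m, (r k - r m)) := by
        rw [evalP]
        have hz : ∏ k, (-(r m) + r k) = 0 :=
          Finset.prod_eq_zero (Finset.mem_univ m) (by simp)
        rw [hz, mul_zero]
        rw [Finset.sum_eq_single m]
        · have he2 : ∏ k ∈ Finset.univ.erase m, (-(r m) + r k) =
              ∏ k ∈ Finset.univ.erase m, (r k - r m) :=
            Finset.prod_congr rfl (fun k _ => by ring)
          rw [he2]; ring
        · intro i _ hi
          have hmem : m ∈ Finset.univ.erase i :=
            Finset.mem_erase.2 ⟨Ne.symm hi, Finset.mem_univ m⟩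
          rw [Finset.prod_eq_zero hmem (by simp), mul_zero]
        · intro h; exact absurd (Finset.mem_univ m) h
      have hsplit : Finset.univ.erase m = Finset.Iio m ∪ Finset.Ioi m := by
        ext k
        simp only [Finset.mem_erase, Finset.mem_univ, and_true, Finset.mem_union,
          Finset.mem_Iio, Finset.mem_Ioi]
        exact ⟨fun h => h.lt_or_gt, fun h => h.elim ne_of_lt (fun h' => (ne_of_lt h').symm)⟩
      have hdisj : Disjoint (Finset.Iio m) (Finset.Ioi m) := by
        apply Finset.disjoint_left.2
        intro k h1 h2
        exact absurd (Finset.mem_Iio.1 h1) (not_lt.2 (Finset.mem_Ioi.1 h2).le)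
      have hprod : ∏ k ∈ Finset.univ.erase m, (r k - r m) =
          (∏ k ∈ Finset.Iio m, (r k - r m)) * ∏ k ∈ Finset.Ioi m, (r k - r m) := by
        rw [hsplit, Finset.prod_union hdisj]
      have hIio : ∏ k ∈ Finset.Iio m, (r k - r m) =
          (-1:ℝ)^((m:ℕ)) * ∏ k ∈ Finset.Iio m, (r m - r k) := by
        calc ∏ k ∈ Finset.Iio m, (r k - r m)
            = ∏ k ∈ Finset.Iio m, (-1) * (r m - r k) :=
              Finset.prod_congr rfl (fun k _ => by ring)
          _ = ((-1:ℝ)^(Finset.Iio m).card) * ∏ k ∈ Finset.Iio m, (r m - r k) := by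
              rw [Finset.prod_mul_distrib, Finset.prod_const]
          _ = _ := by rw [Fin.card_Iio]
      have hIiopos : 0 < ∏ k ∈ Finset.Iio m, (r m - r k) :=
        Finset.prod_pos (fun k hk => by
          have := hrmono (Finset.mem_Iio.1 hk); linarith)
      have hIoipos : 0 < ∏ k ∈ Finset.Ioi m, (r k - r m) :=
        Finset.prod_pos (fun k hk => by
          have := hrmono (Finset.mem_Ioi.1 hk); linarith)
      rw [hval, hprod, hIio]
      have hkey : (-1:ℝ)^((m:ℕ)+1) *
          -(b m * ((-1:ℝ)^((m:ℕ)) * (∏ k ∈ Finset.Iio m, (r m - r k)) *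
            ∏ k ∈ Finset.Ioi m, (r k - r m))) =
          ((-1:ℝ)^((m:ℕ)))^2 *
            (b m * ((∏ k ∈ Finset.Iio m, (r m - r k)) * ∏ k ∈ Finset.Ioi m, (r k - r m))) := by
        rw [pow_succ]; ring
      rw [hkey]
      have h11 : ((-1:ℝ)^((m:ℕ)))^2 = 1 := by
        rw [← pow_mul, mul_comm, pow_mul]; norm_num
      rw [h11, one_mul]
      exact mul_pos (hb m) (mul_pos hIiopos hIoipos)
    -- continuity
    have hcont : ∀ (c d : ℝ), ContinuousOn (fun y => P.eval y) (Set.Icc c d) :=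
      fun c d => P.continuous.continuousOn
    -- one root in each gap
    have key : ∀ m : Fin N, ∃ x : ℝ, P.eval x = 0 ∧ -(r m) < x ∧
        ∀ _h : 0 < (m:ℕ), x < -(r ⟨(m:ℕ) - 1, by omega⟩) := by
      intro m
      rcases Nat.eq_zero_or_pos (m:ℕ) with hm0 | hm1
      · have hp : ((-1:ℝ))^((m:ℕ)+1) = -1 := by rw [hm0]; norm_num
        have hs1 := hPsign m
        rw [hp] at hs1
        have hPneg : P.eval (-(r m)) < 0 := by linarith
        have hle : -(r m) ≤ x0 := by linarith [hr m]
        obtain ⟨x, hxmem, hxeval⟩ :=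
          intermediate_value_Ioo hle (hcont _ _) (Set.mem_Ioo.2 ⟨hPneg, hPx0⟩)
        exact ⟨x, hxeval, hxmem.1, fun h => absurd hm0 (by omega)⟩
      · set m' : Fin N := ⟨(m:ℕ) - 1, by omega⟩ with hm'
        have hm'm : m' < m := by
          rw [Fin.lt_def]; simp [hm']; omega
        have hrr : r m' < r m := hrmono hm'm
        have hle : -(r m) ≤ -(r m') := by linarith
        have hs1 := hPsign m
        have hs2 := hPsign m'
        have hm'succ : (m' : ℕ) + 1 = (m : ℕ) := by simp [hm']; omega
        rcases Nat.even_or_odd (m:ℕ) with he | ho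
        · have hp1 : ((-1:ℝ))^((m:ℕ)+1) = -1 := by
            rw [pow_succ, Even.neg_one_pow he]; ring
          have hp2 : ((-1:ℝ))^((m':ℕ)+1) = 1 := by
            rw [hm'succ]; exact Even.neg_one_pow he
          rw [hp1] at hs1; rw [hp2, one_mul] at hs2
          have h1 : P.eval (-(r m)) < 0 := by linarith
          obtain ⟨x, hxmem, hxeval⟩ :=
            intermediate_value_Ioo hle (hcont _ _) (Set.mem_Ioo.2 ⟨h1, hs2⟩)
          exact ⟨x, hxeval, hxmem.1, fun _ => hxmem.2⟩
        · have hp1 : ((-1:ℝ))^((m:ℕ)+1) = 1 := Even.neg_one_pow (Odd.add_one ho)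
          have hp2 : ((-1:ℝ))^((m':ℕ)+1) = -1 := by rw [hm'succ]; exact Odd.neg_one_pow ho
          rw [hp1, one_mul] at hs1; rw [hp2] at hs2
          have h2 : P.eval (-(r m')) < 0 := by linarith
          obtain ⟨x, hxmem, hxeval⟩ :=
            intermediate_value_Ioo' hle (hcont _ _) (Set.mem_Ioo.2 ⟨h2, hs1⟩)
          exact ⟨x, hxeval, hxmem.1, fun _ => hxmem.2⟩
    choose ρ hρ0 hρlo hρhi using key
    have hρanti : StrictAnti ρ := by
      intro m1 m2 h12
      have hn12 : (m1:ℕ) < (m2:ℕ) := h12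
      have h1 : 0 < (m2:ℕ) := by omega
      have h2 := hρhi m2 h1
      have h3 : r m1 ≤ r ⟨(m2:ℕ)-1, by omega⟩ :=
        hrmono.monotone (by rw [Fin.le_def]; simp; omega)
      have h4 := hρlo m1
      linarith
    choose σ hσ using fun m => (haroots (ρ m)).1 (hρ0 m)
    have hσmono : StrictMono σ := by
      intro m1 m2 h12
      have hlt := hρanti h12
      rw [hσ m1, hσ m2] at hlt
      exact haanti.lt_iff_gt.1 hlt
    have hσsurj : Function.Surjective σ :=
      Finite.surjective_of_injective hσmono.injective
    have hσid : ∀ m, σ m = m := stmt13_fin_id σ hσmono hσsurj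
    have haρ : ∀ m, a m = ρ m := by
      intro m
      have h := hσ m
      rw [hσid m] at h
      exact h.symm
    have havoid : ∀ (k m : Fin N), a k ∉ Set.Icc (-(r m) - μ) (-(r m) + μ) := by
      intro k m hmem
      have h0 : P.eval (a k) = 0 := (haroots (a k)).2 ⟨k, rfl⟩
      have hge := part2 m (a k) hmem
      rw [h0, abs_zero] at hge
      linarith
    intro i j hij
    have hnij : (i:ℕ) < (j:ℕ) := hij
    have hj1 : 0 < (j:ℕ) := by omega
    have hai_lo : -(r i) < a i := by rw [haρ i]; exact hρlo i
    have hai : -(r i) + μ < a i := by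
      have hni := havoid i i
      simp only [Set.mem_Icc, not_and_or, not_le] at hni
      rcases hni with h | h
      · linarith
      · exact h
    have haj_hi : a j < -(r ⟨(j:ℕ)-1, by omega⟩) := by rw [haρ j]; exact hρhi j hj1
    have haj : a j < -(r ⟨(j:ℕ)-1, by omega⟩) - μ := by
      have hnj := havoid j ⟨(j:ℕ)-1, by omega⟩
      simp only [Set.mem_Icc, not_and_or, not_le] at hnj
      rcases hnj with h | h
      · exact h
      · linarith
    have hri : r i ≤ r ⟨(j:ℕ)-1, by omega⟩ :=
      hrmono.monotone (by rw [Fin.le_def]; simp; omega)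
    calc 2*μ ≤ a i - a j := by linarith
      _ ≤ |a i - a j| := le_abs_self _
  exact ⟨part1, part2, part3⟩
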